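/- Let N ≥ 3, let μ be a nonzero Radon measure on ℝ^N with support contained in the open half space ℝ^N_+ and finite Newtonian potential, let 1 < k < N-1, and let p = (N-1)/(k-1). Then for every λ > 0 the problem (1.1) has no positive solution u with x' ↦ u(x',0) belonging to L^p(ℝ^{N-1}). -/

import Mathlib

open MeasureTheory ENNReal Filter

noncomputable section

/-- The point `(y', t) ∈ ℝ^N` for `y' ∈ ℝ^{N-1}`, `t ∈ ℝ`. -/
def up (N : ℕ) (y' : EuclideanSpace ℝ (Fin (N - 1))) (t : ℝ) : EuclideanSpace ℝ (Fin N) :=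
  (WithLp.equiv 2 (Fin N → ℝ)).symm fun i => if h : (i : ℕ) < N - 1 then y' ⟨i, h⟩ else t

/-- The last coordinate `x_N` of `x ∈ ℝ^N`. -/
def ht (N : ℕ) (x : EuclideanSpace ℝ (Fin N)) : ℝ :=
  if h : N - 1 < N then x ⟨N - 1, h⟩ else 0

/-- Reflection `x̄ = (x', -x_N)` of `x = (x', x_N)` in the hyperplane `x_N = 0`. -/
def reflN (N : ℕ) (x : EuclideanSpace ℝ (Fin N)) : EuclideanSpace ℝ (Fin N) :=
  (WithLp.equiv 2 (Fin N → ℝ)).symm fun i => if (i : ℕ) < N - 1 then x i else -x i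

/-- Surface area `σ_N` of the unit sphere in `ℝ^N` (equal to `N` times the unit ball volume). -/
def sphereArea (N : ℕ) : ℝ :=
  N * (volume (Metric.ball (0 : EuclideanSpace ℝ (Fin N)) 1)).toReal

/-- The open upper half space `ℝ^N_+ = ℝ^{N-1} × (0,∞)`. -/
def upperHalf (N : ℕ) : Set (EuclideanSpace ℝ (Fin N)) := {x | 0 < ht N x}

/-- `H_u(x') = ∫_{ℝ^{N-1}} u(y',0)^p |x'-y'|^{-k} dy'`. -/
def Hu (N : ℕ) (p k : ℝ) (u : EuclideanSpace ℝ (Fin N) → ℝ)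
    (x' : EuclideanSpace ℝ (Fin (N - 1))) : ℝ≥0∞ :=
  ∫⁻ y', ENNReal.ofReal (u (up N y' 0)) ^ p * ENNReal.ofReal ‖x' - y'‖ ^ (-k)

/-- The Newtonian potential `U^ν(x) = (1/((N-2)σ_N)) ∫ |x-y|^{2-N} dν(y)`. -/
def NewtPot (N : ℕ) (ν : Measure (EuclideanSpace ℝ (Fin N)))
    (x : EuclideanSpace ℝ (Fin N)) : ℝ :=
  (((N : ℝ) - 2) * sphereArea N)⁻¹ * (∫⁻ y, ENNReal.ofReal ‖x - y‖ ^ ((2:ℝ) - N) ∂ν).toReal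

/-- The Green potential `∫_{ℝ^N_+} G(x,y) dμ(y)` for the Neumann Green function
`G(x,y) = (|x-y|^{2-N} + |x̄-y|^{2-N})/((N-2)σ_N)` of the half space. -/
def GreenPot (N : ℕ) (μ : Measure (EuclideanSpace ℝ (Fin N)))
    (x : EuclideanSpace ℝ (Fin N)) : ℝ :=
  (((N : ℝ) - 2) * sphereArea N)⁻¹ *
    (∫⁻ y, (ENNReal.ofReal ‖x - y‖ ^ ((2:ℝ) - N)
          + ENNReal.ofReal ‖reflN N x - y‖ ^ ((2:ℝ) - N)) ∂μ).toReal

/-- `μ` is a nonzero Radon (locally finite Borel) measure whose support is contained in the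
open upper half space and whose Newtonian potential is finite everywhere. -/
def AdmissibleMeasure (N : ℕ) (μ : Measure (EuclideanSpace ℝ (Fin N))) : Prop :=
  μ ≠ 0 ∧ IsLocallyFiniteMeasure μ ∧
    (∃ F : Set (EuclideanSpace ℝ (Fin N)), IsClosed F ∧ F ⊆ upperHalf N ∧ μ Fᶜ = 0) ∧
    (∀ x, (∫⁻ y, ENNReal.ofReal ‖x - y‖ ^ ((2:ℝ) - N) ∂μ) < ⊤)

/-- A measurable function `u` is a positive solution of problem (1.1):
(i) `u > 0` a.e. in `ℝ^N_+`, and for a.e. `x' ∈ ℝ^{N-1}`, `u(z) → u(x',0)` as `z → (x',0)`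
with `z ∈ ℝ^N_+`;
(ii) `H_u < ∞` a.e. in `ℝ^{N-1}`, and `∫_{ℝ^{N-1}} H_u(y')|x-(y',0)|^{2-N} dy' < ∞` for
a.e. `x ∈ ℝ^N_+`;
(iii) `u(x) = ∫_{ℝ^N_+} G(x,y) dμ(y)
　　　　+ (2λ/((N-2)σ_N)) ∫∫ u(z',0)^p |x-(y',0)|^{2-N} |y'-z'|^{-k} dz' dy'`
for a.e. `x ∈ ℝ^N_+`. -/
def IsPosSolution (N : ℕ) (p lam k : ℝ) (μ : Measure (EuclideanSpace ℝ (Fin N)))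
    (u : EuclideanSpace ℝ (Fin N) → ℝ) : Prop :=
  Measurable u ∧
  (∀ᵐ x ∂(volume.restrict (upperHalf N)), 0 < u x) ∧
  (∀ᵐ x' ∂(volume : Measure (EuclideanSpace ℝ (Fin (N - 1)))),
    Tendsto u (nhdsWithin (up N x' 0) (upperHalf N)) (nhds (u (up N x' 0)))) ∧
  (∀ᵐ x' ∂(volume : Measure (EuclideanSpace ℝ (Fin (N - 1)))), Hu N p k u x' < ⊤) ∧
  (∀ᵐ x ∂(volume.restrict (upperHalf N)),
    (∫⁻ y', Hu N p k u y' * ENNReal.ofReal ‖x - up N y' 0‖ ^ ((2:ℝ) - N)) < ⊤) ∧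
  (∀ᵐ x ∂(volume.restrict (upperHalf N)),
    ENNReal.ofReal (u x) =
      ENNReal.ofReal (((N : ℝ) - 2) * sphereArea N)⁻¹ *
        (∫⁻ y, (ENNReal.ofReal ‖x - y‖ ^ ((2:ℝ) - N)
              + ENNReal.ofReal ‖reflN N x - y‖ ^ ((2:ℝ) - N)) ∂μ) +
      ENNReal.ofReal (2 * lam / (((N : ℝ) - 2) * sphereArea N)) *
        ∫⁻ y', ENNReal.ofReal ‖x - up N y' 0‖ ^ ((2:ℝ) - N) * Hu N p k u y')

/-- A measurable function `u` is a positive solution of problem (1.1) with `μ ≡ 0`: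
conditions (i), (ii) as above and
(iii) `u(x) = (2λ/((N-2)σ_N)) ∫∫ u(z',0)^p |x-(y',0)|^{2-N} |y'-z'|^{-k} dz' dy'`
for a.e. `x ∈ ℝ^N_+`. -/
def IsPosSolution0 (N : ℕ) (p lam k : ℝ) (u : EuclideanSpace ℝ (Fin N) → ℝ) : Prop :=
  Measurable u ∧
  (∀ᵐ x ∂(volume.restrict (upperHalf N)), 0 < u x) ∧
  (∀ᵐ x' ∂(volume : Measure (EuclideanSpace ℝ (Fin (N - 1)))),
    Tendsto u (nhdsWithin (up N x' 0) (upperHalf N)) (nhds (u (up N x' 0)))) ∧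
  (∀ᵐ x' ∂(volume : Measure (EuclideanSpace ℝ (Fin (N - 1)))), Hu N p k u x' < ⊤) ∧
  (∀ᵐ x ∂(volume.restrict (upperHalf N)),
    (∫⁻ y', Hu N p k u y' * ENNReal.ofReal ‖x - up N y' 0‖ ^ ((2:ℝ) - N)) < ⊤) ∧
  (∀ᵐ x ∂(volume.restrict (upperHalf N)),
    ENNReal.ofReal (u x) =
      ENNReal.ofReal (2 * lam / (((N : ℝ) - 2) * sphereArea N)) *
        ∫⁻ y', ENNReal.ofReal ‖x - up N y' 0‖ ^ ((2:ℝ) - N) * Hu N p k u y')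

/-- The boundary trace `x' ↦ u(x',0)` belongs to `L^q_loc(ℝ^{N-1})`. -/
def BdryLocLp (N : ℕ) (q : ℝ) (u : EuclideanSpace ℝ (Fin N) → ℝ) : Prop :=
  ∀ K : Set (EuclideanSpace ℝ (Fin (N - 1))), IsCompact K →
    MemLp (fun x' => u (up N x' 0)) (ENNReal.ofReal q) (volume.restrict K)


section AuxLemmas
open Metric
variable {N : ℕ}

lemma euclidean_nontrivial {m : ℕ} (hm : 1 ≤ m) : Nontrivial (EuclideanSpace ℝ (Fin m)) := by
  refine ⟨EuclideanSpace.single (⟨0, hm⟩ : Fin m) (1:ℝ), 0, fun h => ?_⟩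
  have := congr_arg norm h
  rw [EuclideanSpace.norm_single, norm_zero, norm_one] at this
  exact one_ne_zero this

lemma up_apply (y' : EuclideanSpace ℝ (Fin (N-1))) (t : ℝ) (i : Fin N) :
    up N y' t i = if h : (i : ℕ) < N - 1 then y' ⟨i, h⟩ else t := rfl

lemma ht_up (hN : 1 ≤ N) (y' : EuclideanSpace ℝ (Fin (N-1))) (t : ℝ) :
    ht N (up N y' t) = t := by
  have h : N - 1 < N := by omega
  simp only [ht, dif_pos h, up_apply]
  rw [dif_neg (by omega)]

lemma continuous_ht : Continuous (ht N) := by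
  unfold ht
  split
  · exact PiLp.continuous_apply 2 _ _
  · exact continuous_const

lemma continuous_up (t : ℝ) : Continuous (fun y' : EuclideanSpace ℝ (Fin (N-1)) => up N y' t) := by
  unfold up
  refine (PiLp.continuous_toLp 2 _).comp (continuous_pi fun i => ?_)
  beta_reduce
  split
  · exact PiLp.continuous_apply 2 _ _
  · exact continuous_const

lemma dist_up (hN : 1 ≤ N) (x' y' : EuclideanSpace ℝ (Fin (N-1))) (s t : ℝ) :
    dist (up N x' s) (up N y' t) = Real.sqrt (dist x' y' ^ 2 + (s - t) ^ 2) := by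
  rw [EuclideanSpace.dist_eq]
  congr 1
  have hN' : N - 1 + 1 = N := by omega
  have hval : ∀ j : Fin (N - 1 + 1), ((finCongr hN' j : Fin N) : ℕ) = (j : ℕ) := fun j => rfl
  rw [← (finCongr hN').sum_comp fun i => dist (up N x' s i) (up N y' t i) ^ 2, Fin.sum_univ_castSucc]
  have h1 : ∀ j : Fin (N-1), dist (up N x' s (finCongr hN' j.castSucc)) (up N y' t (finCongr hN' j.castSucc)) = dist (x' j) (y' j) := by
    intro j
    have hj : ((finCongr hN' j.castSucc : Fin N) : ℕ) < N - 1 := by rw [hval]; simp [Fin.is_lt j]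
    rw [up_apply, up_apply, dif_pos hj, dif_pos hj]
    set_option linter.unreachableTactic false in
    set_option linter.unusedTactic false in
    congr 1 <;> · congr 1; ext; rw [hval]; simp
  have h2 : ((finCongr hN' (Fin.last (N-1)) : Fin N) : ℕ) = N - 1 := by rw [hval]; simp
  rw [up_apply, up_apply, dif_neg (by omega), dif_neg (by omega)]
  rw [Finset.sum_congr rfl fun j _ => by rw [h1 j]]
  rw [EuclideanSpace.dist_eq, Real.sq_sqrt (by positivity), Real.dist_eq]
  rw [sq_abs]

lemma norm_up_sub_zero (hN : 1 ≤ N) (x' y' : EuclideanSpace ℝ (Fin (N-1))) :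
    ‖up N x' 0 - up N y' 0‖ = ‖x' - y'‖ := by
  rw [← dist_eq_norm, ← dist_eq_norm, dist_up hN]
  simp [Real.sqrt_sq dist_nonneg]

lemma dist_up_same (hN : 1 ≤ N) (x' : EuclideanSpace ℝ (Fin (N-1))) (s t : ℝ) :
    dist (up N x' s) (up N x' t) = |s - t| := by
  rw [dist_up hN]
  simp [Real.sqrt_sq_eq_abs]

lemma isOpen_upperHalf : IsOpen (upperHalf N) :=
  isOpen_lt continuous_const continuous_ht

lemma up_mem_upperHalf (hN : 1 ≤ N) (x' : EuclideanSpace ℝ (Fin (N-1))) {t : ℝ} (h : 0 < t) :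
    up N x' t ∈ upperHalf N := by
  simp only [upperHalf, Set.mem_setOf_eq, ht_up hN]; exact h

lemma up_zero_not_mem (hN : 1 ≤ N) (x' : EuclideanSpace ℝ (Fin (N-1))) :
    up N x' 0 ∉ upperHalf N := by
  simp [upperHalf, ht_up hN]

-- rpow helpers
lemma ennrpow_anti {a b : ℝ≥0∞} {k : ℝ} (hk : 0 ≤ k) (h : a ≤ b) : b ^ (-k) ≤ a ^ (-k) := by
  rw [ENNReal.rpow_neg, ENNReal.rpow_neg]
  exact ENNReal.inv_le_inv.mpr (ENNReal.rpow_le_rpow h hk)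

lemma ennrpow_ne_zero {a : ℝ≥0∞} (h0 : a ≠ 0) (ht : a ≠ ⊤) (e : ℝ) : a ^ e ≠ 0 :=
  (ENNReal.rpow_pos (pos_iff_ne_zero.mpr h0) ht).ne'

lemma ennrpow_ne_top {a : ℝ≥0∞} (h0 : a ≠ 0) (ht : a ≠ ⊤) (e : ℝ) : a ^ e ≠ ⊤ := by
  rcases le_or_gt 0 e with he | he
  · exact ENNReal.rpow_ne_top_of_nonneg he ht
  · have : a ^ e = (a ^ (-e))⁻¹ := by rw [← ENNReal.rpow_neg, neg_neg]
    rw [this, Ne, ENNReal.inv_eq_top]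
    exact ennrpow_ne_zero h0 ht _

lemma ennrpow_pos_integrand (hN : 3 ≤ N) (x y : EuclideanSpace ℝ (Fin N)) :
    0 < ENNReal.ofReal ‖x - y‖ ^ ((2:ℝ) - N) := by
  rcases eq_or_ne ‖x - y‖ 0 with h | h
  · rw [h, ENNReal.ofReal_zero, ENNReal.zero_rpow_of_neg (by
      have : (3:ℝ) ≤ N := by exact_mod_cast hN
      linarith)]
    exact ENNReal.zero_lt_top
  · exact ENNReal.rpow_pos (ENNReal.ofReal_pos.mpr ((norm_nonneg _).lt_of_ne (Ne.symm h))) ENNReal.ofReal_ne_top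

-- kernel tendsto
lemma tendsto_kernel {E : Type*} [NormedAddCommGroup E] {x₀ y : E} (e : ℝ)
    (zs : ℕ → E) (hzs : Tendsto zs atTop (nhds x₀)) (hxy : x₀ ≠ y) :
    Tendsto (fun n => ENNReal.ofReal ‖zs n - y‖ ^ e) atTop
      (nhds (ENNReal.ofReal ‖x₀ - y‖ ^ e)) := by
  have hr : 0 < ‖x₀ - y‖ := by rwa [norm_pos_iff, sub_ne_zero]
  have h1 : Tendsto (fun n => ‖zs n - y‖) atTop (nhds ‖x₀ - y‖) :=
    ((continuous_id.sub continuous_const).norm.tendsto x₀).comp hzs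
  have h2 : Tendsto (fun n => ‖zs n - y‖ ^ e) atTop (nhds (‖x₀ - y‖ ^ e)) :=
    (Real.continuousAt_rpow_const _ _ (Or.inl hr.ne')).tendsto.comp h1
  have h3 : Tendsto (fun n => ENNReal.ofReal (‖zs n - y‖ ^ e)) atTop
      (nhds (ENNReal.ofReal (‖x₀ - y‖ ^ e))) :=
    (ENNReal.continuous_ofReal.tendsto _).comp h2
  have hev : ∀ᶠ n in atTop, ENNReal.ofReal (‖zs n - y‖ ^ e) = ENNReal.ofReal ‖zs n - y‖ ^ e := by
    filter_upwards [h1.eventually (eventually_gt_nhds hr)] with n hn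
    exact (ENNReal.ofReal_rpow_of_pos hn).symm
  rw [← ENNReal.ofReal_rpow_of_pos hr] at h3
  exact h3.congr' hev

-- sequence construction toward a boundary point through a co-null subset of the half space
lemma exists_seq (hN : 3 ≤ N) (E₀ : Set (EuclideanSpace ℝ (Fin N))) (hE₀ : volume E₀ = 0)
    (x' : EuclideanSpace ℝ (Fin (N-1))) :
    ∃ zs : ℕ → EuclideanSpace ℝ (Fin N), (∀ n, zs n ∈ upperHalf N \ E₀) ∧
      Tendsto zs atTop (nhds (up N x' 0)) := by
  have h1 : ∀ n : ℕ, ∃ z, z ∈ (ball (up N x' 0) (1/(n+1)) ∩ upperHalf N) \ E₀ := by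
    intro n
    have hop : IsOpen (ball (up N x' 0) (1/(n+1)) ∩ upperHalf N) :=
      isOpen_ball.inter isOpen_upperHalf
    have hne : (ball (up N x' 0) (1/(n+1)) ∩ upperHalf N).Nonempty := by
      refine ⟨up N x' (1/(2*(n+1))), ?_, up_mem_upperHalf (by omega) _ (by positivity)⟩
      rw [mem_ball, dist_up_same (by omega)]
      rw [sub_zero]
      rw [abs_of_pos (by positivity)]
      rw [div_lt_div_iff₀ (by positivity) (by positivity)]
      nlinarith [Nat.cast_nonneg (α := ℝ) n]
    have hpos := hop.measure_pos volume hne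
    by_contra hc
    push_neg at hc
    have : (ball (up N x' 0) (1/(n+1)) ∩ upperHalf N) ⊆ E₀ := by
      intro z hz
      by_contra hz2
      exact hc z ⟨hz, hz2⟩
    exact absurd (measure_mono this) (by rw [hE₀]; exact (lt_irrefl 0 <| hpos.trans_le ·))
  choose zs hzs using h1
  refine ⟨zs, fun n => ⟨(hzs n).1.2, (hzs n).2⟩, ?_⟩
  rw [tendsto_iff_dist_tendsto_zero]
  have hb : ∀ n : ℕ, dist (zs n) (up N x' 0) ≤ 1/(n+1) := fun n => (mem_ball.mp (hzs n).1.1).le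
  refine squeeze_zero (fun n => dist_nonneg) hb tendsto_one_div_add_atTop_nhds_zero_nat

lemma boundary_fatou (hN : 3 ≤ N) {W : Type*} [MeasurableSpace W] (ν : Measure W)
    (K : EuclideanSpace ℝ (Fin N) → W → ℝ≥0∞)
    (u : EuclideanSpace ℝ (Fin N) → ℝ)
    (E₀ : Set (EuclideanSpace ℝ (Fin N))) (hE₀ : volume E₀ = 0)
    (hineq : ∀ z ∈ upperHalf N \ E₀, ∫⁻ w, K z w ∂ν ≤ ENNReal.ofReal (u z))
    (hKmeas : ∀ z, Measurable (K z))
    (x' : EuclideanSpace ℝ (Fin (N-1)))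
    (hcont : ∀ᵐ w ∂ν, ∀ zs : ℕ → EuclideanSpace ℝ (Fin N),
        Tendsto zs atTop (nhds (up N x' 0)) → (∀ n, zs n ∈ upperHalf N) →
        K (up N x' 0) w ≤ atTop.liminf fun n => K (zs n) w)
    (hu : Tendsto u (nhdsWithin (up N x' 0) (upperHalf N)) (nhds (u (up N x' 0)))) :
    ∫⁻ w, K (up N x' 0) w ∂ν ≤ ENNReal.ofReal (u (up N x' 0)) := by
  obtain ⟨zs, hmem, htend⟩ := exists_seq hN E₀ hE₀ x'
  have hzs' : Tendsto zs atTop (nhdsWithin (up N x' 0) (upperHalf N)) := by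
    rw [tendsto_nhdsWithin_iff]
    exact ⟨htend, Eventually.of_forall fun n => (hmem n).1⟩
  have hlim : Tendsto (fun n => ENNReal.ofReal (u (zs n))) atTop
      (nhds (ENNReal.ofReal (u (up N x' 0)))) :=
    (ENNReal.continuous_ofReal.tendsto _).comp (hu.comp hzs')
  calc ∫⁻ w, K (up N x' 0) w ∂ν
      ≤ ∫⁻ w, atTop.liminf (fun n => K (zs n) w) ∂ν := by
        refine lintegral_mono_ae ?_
        filter_upwards [hcont] with w hw
        exact hw zs htend fun n => (hmem n).1
    _ ≤ atTop.liminf fun n => ∫⁻ w, K (zs n) w ∂ν :=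
        lintegral_liminf_le fun n => hKmeas _
    _ ≤ atTop.liminf fun n => ENNReal.ofReal (u (zs n)) :=
        liminf_le_liminf (Eventually.of_forall fun n => hineq _ (hmem n))
    _ = ENNReal.ofReal (u (up N x' 0)) := hlim.liminf_eq

lemma ennrpow_add_exp {a : ℝ≥0∞} (h0 : a ≠ 0) (ht : a ≠ ⊤) (q r : ℝ) :
    a ^ q * a ^ r = a ^ (q + r) := (ENNReal.rpow_add q r h0 ht).symm

lemma lintegral_norm_rpow_eq_top (m : ℕ) (hm : 1 ≤ m) :
    ∫⁻ x in {x : EuclideanSpace ℝ (Fin m) | 2 ≤ ‖x‖}, ENNReal.ofReal ‖x‖ ^ (-(m:ℝ)) ∂volume = ⊤ := by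
  classical
  haveI : Nontrivial (EuclideanSpace ℝ (Fin m)) := by
    refine ⟨EuclideanSpace.single (⟨0, hm⟩ : Fin m) (1:ℝ), 0, fun h => ?_⟩
    have := congr_arg norm h
    rw [EuclideanSpace.norm_single, norm_zero, norm_one] at this
    exact one_ne_zero this
  set c : ℕ → EuclideanSpace ℝ (Fin m) := fun n => (3 * 2^n : ℝ) • EuclideanSpace.single (⟨0, hm⟩ : Fin m) (1:ℝ) with hc
  have hnc : ∀ n, ‖c n‖ = 3 * 2^n := by
    intro n
    rw [hc]
    rw [norm_smul, EuclideanSpace.norm_single, norm_one, mul_one, Real.norm_eq_abs,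
      abs_of_pos (by positivity)]
  set B : ℕ → Set (EuclideanSpace ℝ (Fin m)) := fun n => ball (c n) (2^n) with hB
  have hxlow : ∀ n, ∀ x ∈ B n, (2:ℝ)^(n+1) < ‖x‖ := by
    intro n x hx
    have h1 : ‖x - c n‖ < 2^n := by rwa [← dist_eq_norm, ← mem_ball]
    have h2 := norm_sub_norm_le (c n) x
    rw [hnc n] at h2
    rw [norm_sub_rev] at h2
    have e1 : (2:ℝ)^(n+1) = 2*2^n := by ring
    linarith
  have hxhigh : ∀ n, ∀ x ∈ B n, ‖x‖ ≤ (2:ℝ)^(n+2) := by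
    intro n x hx
    have h1 : ‖x - c n‖ < 2^n := by rwa [← dist_eq_norm, ← mem_ball]
    have h2 := norm_le_norm_add_norm_sub' x (c n)
    rw [hnc n] at h2
    have e1 : (2:ℝ)^(n+2) = 4*2^n := by ring
    linarith
  have hsub : ∀ n, B n ⊆ {x : EuclideanSpace ℝ (Fin m) | 2 ≤ ‖x‖} := by
    intro n x hx
    have := (hxlow n x hx).le
    have h2 : (2:ℝ) ≤ 2^(n+1) := by
      calc (2:ℝ) = 2^1 := (pow_one 2).symm
      _ ≤ 2^(n+1) := by apply pow_le_pow_right₀ (by norm_num); omega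
    exact le_trans h2 this
  have hdisj : Pairwise (Function.onFun Disjoint B) := by
    have key : ∀ a b : ℕ, a < b → Disjoint (B a) (B b) := by
      intro a b hab
      rw [Set.disjoint_left]
      intro x hxa hxb
      have h1 := hxhigh a x hxa
      have h2 := hxlow b x hxb
      have h3 : (2:ℝ)^(a+2) ≤ 2^(b+1) := by apply pow_le_pow_right₀ (by norm_num); omega
      linarith
    intro a b hab
    rcases lt_or_gt_of_ne hab with h | h
    · exact key a b h
    · exact (key b a h).symm
  set Vc := volume (ball (0:EuclideanSpace ℝ (Fin m)) 1) with hVc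
  have hVc0 : Vc ≠ 0 := (isOpen_ball.measure_pos volume (by simp)).ne'
  have hVcT : Vc ≠ ⊤ := measure_ball_lt_top.ne
  have ha0 : (ENNReal.ofReal 2) ≠ 0 := by simp
  have haT : (ENNReal.ofReal 2) ≠ ⊤ := ENNReal.ofReal_ne_top
  set t₀ : ℝ≥0∞ := ENNReal.ofReal 2 ^ (-(2:ℝ)*m) * Vc with ht₀
  have ht₀0 : t₀ ≠ 0 := mul_ne_zero (ennrpow_ne_zero ha0 haT _) hVc0
  have hvol : ∀ n, volume (B n) = ENNReal.ofReal 2 ^ ((n:ℝ)*m) * Vc := by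
    intro n
    rw [hB]
    rw [Measure.addHaar_ball_of_pos _ _ (by positivity), finrank_euclideanSpace_fin]
    rw [ENNReal.ofReal_rpow_of_pos (by norm_num : (0:ℝ) < 2)]
    congr 1
    rw [← Real.rpow_natCast (2:ℝ) n, ← Real.rpow_natCast _ m, ← Real.rpow_mul (by norm_num)]
  have big : ∀ n : ℕ, t₀ ≤ ∫⁻ x in B n, ENNReal.ofReal ‖x‖ ^ (-(m:ℝ)) ∂volume := by
    intro n
    have step : ENNReal.ofReal 2 ^ (-(((n:ℝ)+2)*m)) * volume (B n) ≤
        ∫⁻ x in B n, ENNReal.ofReal ‖x‖ ^ (-(m:ℝ)) ∂volume := by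
      rw [← setLIntegral_const (B n) _]
      refine setLIntegral_mono' measurableSet_ball fun x hx => ?_
      have h1 : ENNReal.ofReal ‖x‖ ≤ ENNReal.ofReal 2 ^ (((n:ℝ)+2)) := by
        rw [show ((n:ℝ)+2) = ((n+2 : ℕ) : ℝ) by push_cast; ring, ENNReal.rpow_natCast,
          ← ENNReal.ofReal_pow (by norm_num)]
        exact ENNReal.ofReal_le_ofReal (hxhigh n x hx)
      calc ENNReal.ofReal 2 ^ (-(((n:ℝ)+2)*m))
          = (ENNReal.ofReal 2 ^ (((n:ℝ)+2))) ^ (-(m:ℝ)) := by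
            rw [← ENNReal.rpow_mul]; congr 1; ring
        _ ≤ ENNReal.ofReal ‖x‖ ^ (-(m:ℝ)) := ennrpow_anti (by positivity) h1
    have heq : ENNReal.ofReal 2 ^ (-(((n:ℝ)+2)*m)) * volume (B n) = t₀ := by
      rw [hvol n, ht₀, ← mul_assoc, ennrpow_add_exp ha0 haT]
      congr 2
      ring
    rwa [heq] at step
  have hunion : ∫⁻ x in ⋃ n, B n, ENNReal.ofReal ‖x‖ ^ (-(m:ℝ)) ∂volume = ⊤ := by
    rw [lintegral_iUnion (fun n => measurableSet_ball) hdisj]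
    rw [eq_top_iff]
    calc (⊤:ℝ≥0∞) = ∑' _ : ℕ, t₀ := (tsum_const_eq_top_of_ne_zero ht₀0).symm
      _ ≤ _ := ENNReal.tsum_le_tsum big
  rw [eq_top_iff, ← hunion]
  exact lintegral_mono_set (Set.iUnion_subset hsub)

variable {u : EuclideanSpace ℝ (Fin N) → ℝ} {p k : ℝ}

lemma measurable_v (hu : Measurable u) :
    Measurable fun y' : EuclideanSpace ℝ (Fin (N-1)) => u (up N y' 0) :=
  hu.comp (continuous_up 0).measurable

lemma measurable_Hu (hu : Measurable u) : Measurable (Hu N p k u) := by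
  unfold Hu
  exact Measurable.lintegral_prod_right'
    (f := fun q : EuclideanSpace ℝ (Fin (N-1)) × EuclideanSpace ℝ (Fin (N-1)) =>
      ENNReal.ofReal (u (up N q.2 0)) ^ p * ENNReal.ofReal ‖q.1 - q.2‖ ^ (-k))
    (Measurable.mul
      (((hu.comp ((continuous_up 0).measurable.comp measurable_snd)).ennreal_ofReal).pow_const _)
      (((continuous_fst.sub continuous_snd).norm.measurable.ennreal_ofReal).pow_const _))

lemma measurable_kernel (z : EuclideanSpace ℝ (Fin N)) (e : ℝ) :
    Measurable fun y' : EuclideanSpace ℝ (Fin (N-1)) =>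
      ENNReal.ofReal ‖z - up N y' 0‖ ^ e :=
  ((continuous_const.sub (continuous_up 0)).norm.measurable.ennreal_ofReal).pow_const _

lemma lintegral_rpow_lt_top_of_memLp {α : Type*} [MeasurableSpace α] {μ : Measure α}
    {f : α → ℝ} {p : ℝ} (hp : 0 < p) (h : MemLp f (ENNReal.ofReal p) μ) :
    ∫⁻ a, (‖f a‖₊ : ℝ≥0∞) ^ p ∂μ < ⊤ := by
  have h2 := h.2
  rw [eLpNorm_eq_lintegral_rpow_enorm_toReal (by simp [ENNReal.ofReal_eq_zero]; linarith)
    ENNReal.ofReal_ne_top, ENNReal.toReal_ofReal hp.le] at h2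
  by_contra hc
  push_neg at hc
  rw [top_le_iff.mp (show ⊤ ≤ ∫⁻ x, ‖f x‖ₑ ^ p ∂μ from hc), ENNReal.top_rpow_of_pos (by positivity)] at h2
  exact absurd h2 (lt_irrefl ⊤)

end AuxLemmas

/-- Theorem 1.1(ii): if `1 < k < N-1` and `p = (N-1)/(k-1)` then, for every `λ > 0`,
problem (1.1) with a nonzero admissible measure `μ` has no positive solution whose
boundary trace lies in `L^p(ℝ^{N-1})`. -/
theorem no_solution_mu_ne_zero_critical
    (N : ℕ) (hN : 3 ≤ N)
    (μ : Measure (EuclideanSpace ℝ (Fin N))) (hμ : AdmissibleMeasure N μ)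
    (k p lam : ℝ) (hk1 : 1 < k) (hkN : k < (N : ℝ) - 1)
    (hp : p = ((N : ℝ) - 1) / (k - 1)) (hlam : 0 < lam) :
    ¬ ∃ u : EuclideanSpace ℝ (Fin N) → ℝ, IsPosSolution N p lam k μ u ∧
      MemLp (fun x' => u (up N x' 0)) (ENNReal.ofReal p)
        (volume : Measure (EuclideanSpace ℝ (Fin (N - 1)))) := by
  rintro ⟨u, ⟨humeas, hupos, htrace, hHufin, hHUint, heqn⟩, hLp⟩
  obtain ⟨hμ0, hμloc, ⟨F, hFclosed, hFsub, hFnull⟩, hμpot⟩ := hμ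
  clear hupos hHUint hμloc hμpot
  have hN1 : (1:ℕ) ≤ N := by omega
  have hNr : (3:ℝ) ≤ N := by exact_mod_cast hN
  have hmcast : ((N - 1 : ℕ) : ℝ) = (N:ℝ) - 1 := by
    rw [Nat.cast_sub hN1, Nat.cast_one]
  have hk0 : (0:ℝ) < k := lt_trans one_pos hk1
  have hp0 : 0 < p := by
    rw [hp]; apply div_pos <;> linarith
  have hσ : 0 < sphereArea N := by
    have h1 : (0:ℝ≥0∞) < volume (Metric.ball (0 : EuclideanSpace ℝ (Fin N)) 1) :=
      Metric.isOpen_ball.measure_pos volume (by simp)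
    have h2 : volume (Metric.ball (0 : EuclideanSpace ℝ (Fin N)) 1) ≠ ⊤ :=
      measure_ball_lt_top.ne
    have h3 : 0 < (volume (Metric.ball (0 : EuclideanSpace ℝ (Fin N)) 1)).toReal :=
      ENNReal.toReal_pos h1.ne' h2
    have h4 : (0:ℝ) < N := by linarith
    exact mul_pos h4 h3
  set cst := ENNReal.ofReal (((N : ℝ) - 2) * sphereArea N)⁻¹ with hcstdef
  have hcst0 : cst ≠ 0 := by
    rw [hcstdef, Ne, ENNReal.ofReal_eq_zero, not_le, inv_pos]
    nlinarith
  have hcstT : cst ≠ ⊤ := ENNReal.ofReal_ne_top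
  set C := ENNReal.ofReal (2 * lam / (((N : ℝ) - 2) * sphereArea N)) with hCdef
  have hC0 : C ≠ 0 := by
    rw [hCdef, Ne, ENNReal.ofReal_eq_zero, not_le]
    apply div_pos (by linarith)
    nlinarith
  have hCT : C ≠ ⊤ := ENNReal.ofReal_ne_top
  -- extract the null set where the equation fails
  rw [ae_restrict_iff' isOpen_upperHalf.measurableSet, ae_iff] at heqn
  obtain ⟨E₀, hE₀vol, hE₀prop⟩ : ∃ E₀ : Set (EuclideanSpace ℝ (Fin N)), volume E₀ = 0 ∧
      ∀ z ∈ upperHalf N \ E₀,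
        ENNReal.ofReal (u z) =
          cst * (∫⁻ y, (ENNReal.ofReal ‖z - y‖ ^ ((2:ℝ) - N)
                + ENNReal.ofReal ‖reflN N z - y‖ ^ ((2:ℝ) - N)) ∂μ) +
          C * ∫⁻ y', ENNReal.ofReal ‖z - up N y' 0‖ ^ ((2:ℝ) - N) * Hu N p k u y' := by
    refine ⟨_, heqn, fun z hz => ?_⟩
    have h2 : ¬¬(z ∈ upperHalf N → ENNReal.ofReal (u z) =
          cst * (∫⁻ y, (ENNReal.ofReal ‖z - y‖ ^ ((2:ℝ) - N)
                + ENNReal.ofReal ‖reflN N z - y‖ ^ ((2:ℝ) - N)) ∂μ) +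
          C * ∫⁻ y', ENNReal.ofReal ‖z - up N y' 0‖ ^ ((2:ℝ) - N) * Hu N p k u y') := hz.2
    exact not_not.mp h2 hz.1
  -- the two one-sided inequalities at interior points
  have hineq1 : ∀ z ∈ upperHalf N \ E₀,
      ∫⁻ y, cst * ENNReal.ofReal ‖z - y‖ ^ ((2:ℝ) - N) ∂μ ≤ ENNReal.ofReal (u z) := by
    intro z hz
    rw [lintegral_const_mul' _ _ hcstT, hE₀prop z hz]
    calc cst * ∫⁻ y, ENNReal.ofReal ‖z - y‖ ^ ((2:ℝ) - N) ∂μ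
        ≤ cst * ∫⁻ y, (ENNReal.ofReal ‖z - y‖ ^ ((2:ℝ) - N)
            + ENNReal.ofReal ‖reflN N z - y‖ ^ ((2:ℝ) - N)) ∂μ :=
          mul_le_mul_right (lintegral_mono fun y => self_le_add_right _ _) _
      _ ≤ _ := self_le_add_right _ _
  have hineq2 : ∀ z ∈ upperHalf N \ E₀,
      ∫⁻ y', C * (ENNReal.ofReal ‖z - up N y' 0‖ ^ ((2:ℝ) - N) * Hu N p k u y') ∂volume
        ≤ ENNReal.ofReal (u z) := by
    intro z hz
    rw [lintegral_const_mul' _ _ hCT, hE₀prop z hz]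
    exact self_le_add_left _ _
  have hFae : ∀ᵐ y ∂μ, y ∈ F := by
    rw [ae_iff]
    exact hFnull
  -- trace inequality (Green part)
  have htr1 : ∀ᵐ x' ∂(volume : Measure (EuclideanSpace ℝ (Fin (N-1)))),
      cst * (∫⁻ y, ENNReal.ofReal ‖up N x' 0 - y‖ ^ ((2:ℝ) - N) ∂μ)
        ≤ ENNReal.ofReal (u (up N x' 0)) := by
    filter_upwards [htrace] with x' hx'
    have hb := boundary_fatou hN μ
      (fun z y => cst * ENNReal.ofReal ‖z - y‖ ^ ((2:ℝ) - N)) u E₀ hE₀vol hineq1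
      (fun z => (((continuous_const.sub continuous_id).norm.measurable.ennreal_ofReal).pow_const
        _).const_mul cst) x' ?_ hx'
    · rwa [lintegral_const_mul' _ _ hcstT] at hb
    · filter_upwards [hFae] with y hyF zs hzs _
      have hy : up N x' 0 ≠ y := fun h => up_zero_not_mem hN1 x' (h ▸ hFsub hyF)
      have h2 : Tendsto (fun n => cst * ENNReal.ofReal ‖zs n - y‖ ^ ((2:ℝ) - N)) atTop
          (nhds (cst * ENNReal.ofReal ‖up N x' 0 - y‖ ^ ((2:ℝ) - N))) :=
        ENNReal.Tendsto.const_mul (tendsto_kernel _ zs hzs hy) (Or.inr hcstT)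
      exact h2.liminf_eq.ge
  -- positivity of the trace
  have hvpos : ∀ᵐ x' ∂(volume : Measure (EuclideanSpace ℝ (Fin (N-1)))), 0 < u (up N x' 0) := by
    filter_upwards [htr1] with x' hx'
    have hI : 0 < ∫⁻ y, ENNReal.ofReal ‖up N x' 0 - y‖ ^ ((2:ℝ) - N) ∂μ := by
      rw [lintegral_pos_iff_support (f := fun y => ENNReal.ofReal ‖up N x' 0 - y‖ ^ ((2:ℝ) - N))
        (((measurable_id.const_sub _).norm.ennreal_ofReal).pow_const _)]
      have hsupp : (Function.support fun y =>
          ENNReal.ofReal ‖up N x' 0 - y‖ ^ ((2:ℝ) - N)) = Set.univ := by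
        ext y
        simp only [Function.mem_support, Set.mem_univ, iff_true]
        exact (ennrpow_pos_integrand hN _ y).ne'
      rw [hsupp]
      exact Measure.measure_univ_pos.mpr hμ0
    have h2 : (0:ℝ≥0∞) < cst * ∫⁻ y, ENNReal.ofReal ‖up N x' 0 - y‖ ^ ((2:ℝ) - N) ∂μ :=
      ENNReal.mul_pos hcst0 hI.ne'
    exact ENNReal.ofReal_pos.mp (lt_of_lt_of_le h2 hx')
  haveI : Nontrivial (EuclideanSpace ℝ (Fin (N-1))) := euclidean_nontrivial (by omega)
  -- trace inequality (nonlinear part)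
  have htr2 : ∀ᵐ x' ∂(volume : Measure (EuclideanSpace ℝ (Fin (N-1)))),
      C * (∫⁻ y', ENNReal.ofReal ‖x' - y'‖ ^ ((2:ℝ) - N) * Hu N p k u y' ∂volume)
        ≤ ENNReal.ofReal (u (up N x' 0)) := by
    filter_upwards [htrace] with x' hx'
    have hb := boundary_fatou hN (volume : Measure (EuclideanSpace ℝ (Fin (N-1))))
      (fun z y' => C * (ENNReal.ofReal ‖z - up N y' 0‖ ^ ((2:ℝ) - N) * Hu N p k u y'))
      u E₀ hE₀vol hineq2
      (fun z => ((measurable_kernel z _).mul (measurable_Hu humeas)).const_mul C) x' ?_ hx'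
    · rw [lintegral_const_mul' _ _ hCT] at hb
      refine le_trans (le_of_eq ?_) hb
      congr 1
      refine lintegral_congr fun y' => ?_
      rw [norm_up_sub_zero hN1]
    · have hne : ∀ᵐ y' ∂(volume : Measure (EuclideanSpace ℝ (Fin (N-1)))), y' ≠ x' := by
        rw [ae_iff]
        have hset : {y' : EuclideanSpace ℝ (Fin (N-1)) | ¬y' ≠ x'} = {x'} := by
          ext y'; simp
        rw [hset]
        exact measure_singleton x'
      filter_upwards [hne, hHufin] with y' hy' hfin zs hzs _
      have hxy : up N x' 0 ≠ up N y' 0 := by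
        intro h
        apply hy'
        have h2 := norm_up_sub_zero (N := N) hN1 x' y'
        rw [h, sub_self, norm_zero] at h2
        exact (sub_eq_zero.mp (norm_eq_zero.mp h2.symm)).symm
      have h2 : Tendsto
          (fun n => C * (ENNReal.ofReal ‖zs n - up N y' 0‖ ^ ((2:ℝ) - N) * Hu N p k u y'))
          atTop
          (nhds (C * (ENNReal.ofReal ‖up N x' 0 - up N y' 0‖ ^ ((2:ℝ) - N) * Hu N p k u y'))) :=
        ENNReal.Tendsto.const_mul
          (ENNReal.Tendsto.mul_const (tendsto_kernel _ zs hzs hxy) (Or.inr hfin.ne))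
          (Or.inr hCT)
      exact h2.liminf_eq.ge
  -- the quantity A
  set A := ∫⁻ z' in Metric.ball (0 : EuclideanSpace ℝ (Fin (N-1))) 1,
      ENNReal.ofReal (u (up N z' 0)) ^ p ∂volume with hAdef
  have hvmeas : Measurable fun z' : EuclideanSpace ℝ (Fin (N-1)) =>
      ENNReal.ofReal (u (up N z' 0)) ^ p :=
    ((measurable_v humeas).ennreal_ofReal).pow_const _
  have hAT : A ≠ ⊤ := by
    have hle : A ≤ ∫⁻ z', (‖u (up N z' 0)‖₊ : ℝ≥0∞) ^ p ∂volume := by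
      refine le_trans (setLIntegral_le_lintegral _ _) (lintegral_mono fun z' => ?_)
      exact ENNReal.rpow_le_rpow (Real.ofReal_le_enorm _) hp0.le
    exact (lt_of_le_of_lt hle (lintegral_rpow_lt_top_of_memLp hp0 hLp)).ne
  have hA0 : A ≠ 0 := by
    intro h0
    rw [hAdef, lintegral_eq_zero_iff hvmeas] at h0
    have hball : volume.restrict (Metric.ball (0 : EuclideanSpace ℝ (Fin (N-1))) 1) ≠ 0 := by
      rw [Ne, Measure.restrict_eq_zero]
      exact (Metric.isOpen_ball.measure_pos volume (by simp)).ne'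
    haveI := ae_neBot.mpr hball
    have hpos' : ∀ᵐ z' ∂(volume.restrict (Metric.ball (0 : EuclideanSpace ℝ (Fin (N-1))) 1)),
        0 < u (up N z' 0) := ae_restrict_of_ae hvpos
    obtain ⟨z', h1, h2⟩ := (h0.and hpos').exists
    rw [Pi.zero_apply] at h1
    exact ennrpow_ne_zero (ENNReal.ofReal_pos.mpr h2).ne' ENNReal.ofReal_ne_top p h1
  -- lower bound for Hu
  have hHulb : ∀ y' : EuclideanSpace ℝ (Fin (N-1)),
      ENNReal.ofReal (‖y'‖ + 1) ^ (-k) * A ≤ Hu N p k u y' := by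
    intro y'
    have step1 : ∫⁻ z' in Metric.ball (0 : EuclideanSpace ℝ (Fin (N-1))) 1,
        ENNReal.ofReal (u (up N z' 0)) ^ p * ENNReal.ofReal (‖y'‖ + 1) ^ (-k) ∂volume
          ≤ Hu N p k u y' := by
      refine le_trans (setLIntegral_mono' measurableSet_ball fun z' hz' => ?_)
        (setLIntegral_le_lintegral _ _)
      refine mul_le_mul_right ?_ _
      refine ennrpow_anti hk0.le (ENNReal.ofReal_le_ofReal ?_)
      have h1 : ‖y' - z'‖ ≤ ‖y'‖ + ‖z'‖ := norm_sub_le _ _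
      have h2 : ‖z'‖ < 1 := mem_ball_zero_iff.mp hz'
      linarith
    rw [lintegral_mul_const' _ _ (ennrpow_ne_top (by
      rw [Ne, ENNReal.ofReal_eq_zero, not_le]
      positivity) ENNReal.ofReal_ne_top _)] at step1
    rwa [mul_comm] at step1
  -- constants for the final bound
  set Vc := volume (Metric.ball (0 : EuclideanSpace ℝ (Fin (N-1))) 1) with hVcdef
  have hVc0 : Vc ≠ 0 := (Metric.isOpen_ball.measure_pos volume (by simp)).ne'
  have hVcT : Vc ≠ ⊤ := measure_ball_lt_top.ne
  have h4i0 : ENNReal.ofReal (4:ℝ)⁻¹ ≠ 0 := by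
    rw [Ne, ENNReal.ofReal_eq_zero, not_le]; norm_num
  have h30 : ENNReal.ofReal (3:ℝ) ≠ 0 := by
    rw [Ne, ENNReal.ofReal_eq_zero, not_le]; norm_num
  set W1 := ENNReal.ofReal (4:ℝ)⁻¹ ^ ((2:ℝ) - N) with hW1def
  set W2 := ENNReal.ofReal (3:ℝ) ^ (-k) with hW2def
  set W3 := ENNReal.ofReal (4:ℝ)⁻¹ ^ (N - 1 : ℕ) with hW3def
  set δ := C * W1 * W2 * A * W3 * Vc with hδdef
  have hδ0 : δ ≠ 0 := by
    rw [hδdef]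
    refine mul_ne_zero (mul_ne_zero (mul_ne_zero (mul_ne_zero (mul_ne_zero hC0 ?_) ?_) hA0) ?_) hVc0
    · exact ennrpow_ne_zero h4i0 ENNReal.ofReal_ne_top _
    · exact ennrpow_ne_zero h30 ENNReal.ofReal_ne_top _
    · exact pow_ne_zero _ h4i0
  have hδT : δ ≠ ⊤ := by
    rw [hδdef]
    refine ENNReal.mul_ne_top (ENNReal.mul_ne_top (ENNReal.mul_ne_top (ENNReal.mul_ne_top
      (ENNReal.mul_ne_top hCT ?_) ?_) hAT) ?_) hVcT
    · exact ennrpow_ne_top h4i0 ENNReal.ofReal_ne_top _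
    · exact ennrpow_ne_top h30 ENNReal.ofReal_ne_top _
    · exact ENNReal.pow_ne_top ENNReal.ofReal_ne_top
  -- main pointwise lower bound
  have hmain : ∀ᵐ x' ∂(volume : Measure (EuclideanSpace ℝ (Fin (N-1)))), 2 ≤ ‖x'‖ →
      δ * ENNReal.ofReal ‖x'‖ ^ ((1:ℝ) - k) ≤ ENNReal.ofReal (u (up N x' 0)) := by
    filter_upwards [htr2] with x' hx' hR
    have hR0 : (0:ℝ) < ‖x'‖ := by linarith
    have hR40 : (0:ℝ) < ‖x'‖ / 4 := by linarith
    have hoR0 : ENNReal.ofReal ‖x'‖ ≠ 0 := (ENNReal.ofReal_pos.mpr hR0).ne'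
    have hoRT : ENNReal.ofReal ‖x'‖ ≠ ⊤ := ENNReal.ofReal_ne_top
    have hstep : (ENNReal.ofReal (‖x'‖/4) ^ ((2:ℝ) - N)
          * (W2 * ENNReal.ofReal ‖x'‖ ^ (-k) * A)) * volume (Metric.ball x' (‖x'‖/4))
        ≤ ∫⁻ y', ENNReal.ofReal ‖x' - y'‖ ^ ((2:ℝ) - N) * Hu N p k u y' ∂volume := by
      rw [← setLIntegral_const (Metric.ball x' (‖x'‖/4))]
      refine le_trans (setLIntegral_mono' measurableSet_ball fun y' hy' => ?_)
        (setLIntegral_le_lintegral _ _)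
      have hd : ‖x' - y'‖ < ‖x'‖/4 := by
        have h1 := Metric.mem_ball.mp hy'
        rw [dist_comm] at h1
        rwa [← dist_eq_norm]
      refine mul_le_mul' ?_ ?_
      · rw [show ((2:ℝ) - N) = -((N:ℝ) - 2) by ring]
        exact ennrpow_anti (by linarith) (ENNReal.ofReal_le_ofReal hd.le)
      · refine le_trans ?_ (hHulb y')
        have hnorm : ‖y'‖ + 1 ≤ 3 * ‖x'‖ := by
          have h1 : ‖y'‖ ≤ ‖x'‖ + ‖y' - x'‖ := norm_le_norm_add_norm_sub' y' x'
          have h2 : ‖y' - x'‖ < ‖x'‖/4 := by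
            rw [← dist_eq_norm]
            exact Metric.mem_ball.mp hy'
          linarith
        have h3 := ennrpow_anti hk0.le (ENNReal.ofReal_le_ofReal hnorm)
        refine mul_le_mul' (le_trans (le_of_eq ?_) h3) le_rfl
        rw [ENNReal.ofReal_mul (by norm_num : (0:ℝ) ≤ 3),
          ENNReal.mul_rpow_of_ne_zero h30 hoR0, hW2def]
    have hchain : C * ((ENNReal.ofReal (‖x'‖/4) ^ ((2:ℝ) - N)
          * (W2 * ENNReal.ofReal ‖x'‖ ^ (-k) * A)) * volume (Metric.ball x' (‖x'‖/4)))
        ≤ ENNReal.ofReal (u (up N x' 0)) :=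
      le_trans (mul_le_mul_right hstep C) hx'
    refine le_trans (le_of_eq ?_) hchain
    have hvol : volume (Metric.ball x' (‖x'‖/4)) = ENNReal.ofReal (‖x'‖/4) ^ (N - 1 : ℕ) * Vc := by
      rw [Measure.addHaar_ball_of_pos _ _ hR40, finrank_euclideanSpace_fin,
        ENNReal.ofReal_pow hR40.le, hVcdef]
    have hsplit : ENNReal.ofReal (‖x'‖/4) = ENNReal.ofReal ‖x'‖ * ENNReal.ofReal (4:ℝ)⁻¹ := by
      rw [← ENNReal.ofReal_mul hR0.le]
      try congr 1
      try ring
    have hX : ENNReal.ofReal (‖x'‖/4) ^ ((2:ℝ) - N)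
        = ENNReal.ofReal ‖x'‖ ^ ((2:ℝ) - N) * W1 := by
      rw [hsplit, ENNReal.mul_rpow_of_ne_zero hoR0 h4i0, hW1def]
    have hZ : ENNReal.ofReal (‖x'‖/4) ^ (N - 1 : ℕ)
        = ENNReal.ofReal ‖x'‖ ^ (((N - 1 : ℕ)):ℝ) * W3 := by
      rw [hsplit, mul_pow, ENNReal.rpow_natCast, hW3def]
    have hmerge : ENNReal.ofReal ‖x'‖ ^ ((2:ℝ) - N) * ENNReal.ofReal ‖x'‖ ^ (-k)
          * ENNReal.ofReal ‖x'‖ ^ (((N - 1 : ℕ)):ℝ)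
        = ENNReal.ofReal ‖x'‖ ^ ((1:ℝ) - k) := by
      rw [ennrpow_add_exp hoR0 hoRT, ennrpow_add_exp hoR0 hoRT]
      congr 1
      rw [hmcast]
      ring
    calc δ * ENNReal.ofReal ‖x'‖ ^ ((1:ℝ) - k)
        = C * W1 * W2 * A * W3 * Vc * (ENNReal.ofReal ‖x'‖ ^ ((2:ℝ) - N)
            * ENNReal.ofReal ‖x'‖ ^ (-k) * ENNReal.ofReal ‖x'‖ ^ (((N - 1 : ℕ)):ℝ)) := by
          rw [← hmerge, hδdef]
      _ = C * ((ENNReal.ofReal ‖x'‖ ^ ((2:ℝ) - N) * W1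
            * (W2 * ENNReal.ofReal ‖x'‖ ^ (-k) * A))
            * (ENNReal.ofReal ‖x'‖ ^ (((N - 1 : ℕ)):ℝ) * W3 * Vc)) := by ring
      _ = C * ((ENNReal.ofReal (‖x'‖/4) ^ ((2:ℝ) - N)
            * (W2 * ENNReal.ofReal ‖x'‖ ^ (-k) * A)) * volume (Metric.ball x' (‖x'‖/4))) := by
          rw [hX, hvol, hZ]
          try ring
  -- raise to the power p
  have hmainp : ∀ᵐ x' ∂(volume : Measure (EuclideanSpace ℝ (Fin (N-1)))), 2 ≤ ‖x'‖ →
      δ ^ p * ENNReal.ofReal ‖x'‖ ^ (-((N - 1 : ℕ):ℝ)) ≤ (‖u (up N x' 0)‖₊ : ℝ≥0∞) ^ p := by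
    filter_upwards [hmain] with x' h hR
    have h1 := ENNReal.rpow_le_rpow (h hR) hp0.le
    rw [ENNReal.mul_rpow_of_nonneg _ _ hp0.le, ← ENNReal.rpow_mul] at h1
    have hexp : ((1:ℝ) - k) * p = -((N - 1 : ℕ):ℝ) := by
      have hkne : k - 1 ≠ 0 := by linarith
      rw [hmcast, hp]
      field_simp
      ring
    rw [hexp] at h1
    exact le_trans h1 (ENNReal.rpow_le_rpow (Real.ofReal_le_enorm _) hp0.le)
  have hδp0 : δ ^ p ≠ 0 := ennrpow_ne_zero hδ0 hδT p
  have hδpT : δ ^ p ≠ ⊤ := ennrpow_ne_top hδ0 hδT p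
  have hS₂ : MeasurableSet {x' : EuclideanSpace ℝ (Fin (N-1)) | 2 ≤ ‖x'‖} :=
    (isClosed_le continuous_const continuous_norm).measurableSet
  have hbig : ∫⁻ x' in {x' : EuclideanSpace ℝ (Fin (N-1)) | 2 ≤ ‖x'‖},
      δ ^ p * ENNReal.ofReal ‖x'‖ ^ (-((N - 1 : ℕ):ℝ)) ∂volume
        ≤ ∫⁻ x', (‖u (up N x' 0)‖₊ : ℝ≥0∞) ^ p ∂volume := by
    refine le_trans (lintegral_mono_ae ?_) (setLIntegral_le_lintegral _ _)
    filter_upwards [ae_restrict_of_ae hmainp, ae_restrict_mem hS₂] with x' h1 h2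
    exact h1 h2
  have htop : ∫⁻ x' in {x' : EuclideanSpace ℝ (Fin (N-1)) | 2 ≤ ‖x'‖},
      δ ^ p * ENNReal.ofReal ‖x'‖ ^ (-((N - 1 : ℕ):ℝ)) ∂volume = ⊤ := by
    rw [lintegral_const_mul' _ _ hδpT, lintegral_norm_rpow_eq_top (N-1) (by omega),
      ENNReal.mul_top hδp0]
  rw [htop] at hbig
  exact absurd (lt_of_le_of_lt hbig (lintegral_rpow_lt_top_of_memLp hp0 hLp)) (lt_irrefl ⊤)


end
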